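/- Under the Regularity assumption, any solution W of the MF ODEs with initialization satisfying |||W|||_0 < ∞ obeys, for every T ≥ 0 and a constant K depending only on the constants of the Regularity assumption: ess-sup sup_{t≤T} |w3(t,C2)| ≤ |||W|||_0 + K·T, and ess-sup sup_{t≤T} |w2(t,C1,C2)| ≤ |||W|||_0 + K·T·(|||W|||_0 + K·T); consequently |||W|||_T < ∞ for every T. -/

import Mathlib

open scoped RealInnerProductSpace ENNReal

noncomputable section

namespace ThreeLayerMF

/-- `ℝ^d`. -/
abbrev Vec (d : ℕ) : Type := EuclideanSpace ℝ (Fin d)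

/-- A neuronal embedding: a product probability space `Ω1 × Ω2` together with measurable
initial weight functions `w10, w20, w30`. -/
structure NeuronalEmbedding (d : ℕ) : Type 1 where
  Ω1 : Type
  Ω2 : Type
  [m1 : MeasurableSpace Ω1]
  [m2 : MeasurableSpace Ω2]
  P1 : MeasureTheory.Measure Ω1
  P2 : MeasureTheory.Measure Ω2
  [prob1 : MeasureTheory.IsProbabilityMeasure P1]
  [prob2 : MeasureTheory.IsProbabilityMeasure P2]
  w10 : Ω1 → Vec d
  w20 : Ω1 → Ω2 → ℝ
  w30 : Ω2 → ℝ
  meas10 : Measurable w10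
  meas20 : Measurable fun p : Ω1 × Ω2 => w20 p.1 p.2
  meas30 : Measurable w30

attribute [instance] NeuronalEmbedding.m1 NeuronalEmbedding.m2
attribute [instance] NeuronalEmbedding.prob1 NeuronalEmbedding.prob2

open MeasureTheory

/-- The data of a three-layer mean-field problem: activations `φ1, φ2, φ3` together with
their derivatives `dφ1, dφ2, dφ3`, the loss `L` with its partial derivative `dL` in the
second variable, learning rate schedules `ξ1, ξ2, ξ3`, and the data distribution `P`. -/
structure MFSetup (d : ℕ) where
  φ1 : ℝ → ℝ
  φ2 : ℝ → ℝ
  φ3 : ℝ → ℝ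
  dφ1 : ℝ → ℝ
  dφ2 : ℝ → ℝ
  dφ3 : ℝ → ℝ
  L : ℝ → ℝ → ℝ
  dL : ℝ → ℝ → ℝ
  ξ1 : ℝ → ℝ
  ξ2 : ℝ → ℝ
  ξ3 : ℝ → ℝ
  P : Measure (Vec d × ℝ)

/-- Assumption 1 (Regularity) with constant `K`. -/
structure Regularity {d : ℕ} (S : MFSetup d) (K : ℝ) : Prop where
  Kpos : 0 < K
  prob : IsProbabilityMeasure S.P
  hdφ1 : ∀ x, HasDerivAt S.φ1 (S.dφ1 x) x
  hdφ2 : ∀ x, HasDerivAt S.φ2 (S.dφ2 x) x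
  hdφ3 : ∀ x, HasDerivAt S.φ3 (S.dφ3 x) x
  hdL : ∀ y v, HasDerivAt (fun w => S.L y w) (S.dL y v) v
  measL : Measurable fun p : ℝ × ℝ => S.L p.1 p.2
  measdL : Measurable fun p : ℝ × ℝ => S.dL p.1 p.2
  Lnonneg : ∀ y v, 0 ≤ S.L y v
  bφ1 : ∀ x, |S.φ1 x| ≤ K
  bφ2 : ∀ x, |S.φ2 x| ≤ K
  bdφ1 : ∀ x, |S.dφ1 x| ≤ K
  bdφ2 : ∀ x, |S.dφ2 x| ≤ K
  bdφ3 : ∀ x, |S.dφ3 x| ≤ K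
  lipdφ1 : LipschitzWith K.toNNReal S.dφ1
  lipdφ2 : LipschitzWith K.toNNReal S.dφ2
  lipdφ3 : LipschitzWith K.toNNReal S.dφ3
  nzdφ2 : ∀ x, S.dφ2 x ≠ 0
  nzdφ3 : ∀ x, S.dφ3 x ≠ 0
  bdL : ∀ y v, |S.dL y v| ≤ K
  lipdL : ∀ y, LipschitzWith K.toNNReal fun v => S.dL y v
  bX : ∀ᵐ z ∂S.P, ‖z.1‖ ≤ K
  ξ1nonneg : ∀ t, 0 ≤ S.ξ1 t
  ξ2nonneg : ∀ t, 0 ≤ S.ξ2 t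
  ξ3nonneg : ∀ t, 0 ≤ S.ξ3 t
  bξ1 : ∀ t, S.ξ1 t ≤ K
  bξ2 : ∀ t, S.ξ2 t ≤ K
  bξ3 : ∀ t, S.ξ3 t ≤ K
  lipξ1 : LipschitzWith K.toNNReal S.ξ1
  lipξ2 : LipschitzWith K.toNNReal S.ξ2
  lipξ3 : LipschitzWith K.toNNReal S.ξ3

/-- A mean-field parameter trajectory `W(t) = (w1(t,·), w2(t,·,·), w3(t,·))` over the
neuronal ensemble `Ω1 × Ω2`, measurable in the ensemble variables at each time. -/
structure MFTraj (d : ℕ) (Ω1 Ω2 : Type*) [MeasurableSpace Ω1] [MeasurableSpace Ω2] where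
  w1 : ℝ → Ω1 → Vec d
  w2 : ℝ → Ω1 → Ω2 → ℝ
  w3 : ℝ → Ω2 → ℝ
  meas1 : ∀ t, Measurable (w1 t)
  meas2 : ∀ t, Measurable fun p : Ω1 × Ω2 => w2 t p.1 p.2
  meas3 : ∀ t, Measurable (w3 t)

variable {d : ℕ} {Ω1 Ω2 : Type*} [MeasurableSpace Ω1] [MeasurableSpace Ω2]

/-- `H2(x, c2; W(t)) = E_{C1}[w2(t,C1,c2) φ1(⟨w1(t,C1), x⟩)]`. -/
def H2 (S : MFSetup d) (P1 : Measure Ω1) (W : MFTraj d Ω1 Ω2) (t : ℝ) (x : Vec d) (c2 : Ω2) : ℝ :=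
  ∫ c1, W.w2 t c1 c2 * S.φ1 ⟪W.w1 t c1, x⟫ ∂P1

/-- `H3(x; W(t)) = E_{C2}[w3(t,C2) φ2(H2(x,C2;W(t)))]`. -/
def H3 (S : MFSetup d) (P1 : Measure Ω1) (P2 : Measure Ω2) (W : MFTraj d Ω1 Ω2)
    (t : ℝ) (x : Vec d) : ℝ :=
  ∫ c2, W.w3 t c2 * S.φ2 (H2 S P1 W t x c2) ∂P2

/-- `ŷ(x; W(t)) = φ3(H3(x;W(t)))`. -/
def yhat (S : MFSetup d) (P1 : Measure Ω1) (P2 : Measure Ω2) (W : MFTraj d Ω1 Ω2)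
    (t : ℝ) (x : Vec d) : ℝ :=
  S.φ3 (H3 S P1 P2 W t x)

/-- `Δ2^H(z, c2; W(t))`. -/
def D2H (S : MFSetup d) (P1 : Measure Ω1) (P2 : Measure Ω2) (W : MFTraj d Ω1 Ω2) (t : ℝ)
    (z : Vec d × ℝ) (c2 : Ω2) : ℝ :=
  S.dL z.2 (yhat S P1 P2 W t z.1) * S.dφ3 (H3 S P1 P2 W t z.1) * W.w3 t c2 *
    S.dφ2 (H2 S P1 W t z.1 c2)

/-- `Δ3(c2; W(t))`. -/
def D3 (S : MFSetup d) (P1 : Measure Ω1) (P2 : Measure Ω2) (W : MFTraj d Ω1 Ω2)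
    (t : ℝ) (c2 : Ω2) : ℝ :=
  ∫ z, S.dL z.2 (yhat S P1 P2 W t z.1) * S.dφ3 (H3 S P1 P2 W t z.1) *
    S.φ2 (H2 S P1 W t z.1 c2) ∂S.P

/-- `Δ2(c1, c2; W(t))`. -/
def D2 (S : MFSetup d) (P1 : Measure Ω1) (P2 : Measure Ω2) (W : MFTraj d Ω1 Ω2)
    (t : ℝ) (c1 : Ω1) (c2 : Ω2) : ℝ :=
  ∫ z, D2H S P1 P2 W t z c2 * S.φ1 ⟪W.w1 t c1, z.1⟫ ∂S.P

/-- `Δ1(c1; W(t))`. -/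
def D1 (S : MFSetup d) (P1 : Measure Ω1) (P2 : Measure Ω2) (W : MFTraj d Ω1 Ω2)
    (t : ℝ) (c1 : Ω1) : Vec d :=
  ∫ z, ((∫ c2, D2H S P1 P2 W t z c2 * W.w2 t c1 c2 ∂P2) * S.dφ1 ⟪W.w1 t c1, z.1⟫) • z.1 ∂S.P

/-- `W` solves the MF ODEs on `[0, ∞)`. -/
def IsMFSol (S : MFSetup d) (P1 : Measure Ω1) (P2 : Measure Ω2) (W : MFTraj d Ω1 Ω2) : Prop :=
  (∀ c2, ∀ t ∈ Set.Ici (0:ℝ),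
      HasDerivWithinAt (fun s => W.w3 s c2) (-(S.ξ3 t * D3 S P1 P2 W t c2)) (Set.Ici 0) t) ∧
  (∀ c1 c2, ∀ t ∈ Set.Ici (0:ℝ),
      HasDerivWithinAt (fun s => W.w2 s c1 c2) (-(S.ξ2 t * D2 S P1 P2 W t c1 c2)) (Set.Ici 0) t) ∧
  (∀ c1, ∀ t ∈ Set.Ici (0:ℝ),
      HasDerivWithinAt (fun s => W.w1 s c1) ((-(S.ξ1 t)) • D1 S P1 P2 W t c1) (Set.Ici 0) t)

/-- Finite-width network parameters. -/
structure NNParams (d n1 n2 : ℕ) where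
  a1 : Fin n1 → Vec d
  a2 : Fin n1 → Fin n2 → ℝ
  a3 : Fin n2 → ℝ

variable {n1 n2 : ℕ}

/-- `𝐇2(x, j2; 𝐖)`. -/
def nH2 (S : MFSetup d) (Wp : NNParams d n1 n2) (x : Vec d) (j2 : Fin n2) : ℝ :=
  (n1 : ℝ)⁻¹ * ∑ j1, Wp.a2 j1 j2 * S.φ1 ⟪Wp.a1 j1, x⟫

/-- `𝐇3(x; 𝐖)`. -/
def nH3 (S : MFSetup d) (Wp : NNParams d n1 n2) (x : Vec d) : ℝ :=
  (n2 : ℝ)⁻¹ * ∑ j2, Wp.a3 j2 * S.φ2 (nH2 S Wp x j2)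

/-- `ŷ(x; 𝐖)`. -/
def nyhat (S : MFSetup d) (Wp : NNParams d n1 n2) (x : Vec d) : ℝ := S.φ3 (nH3 S Wp x)

/-- `Δ2^𝐇(z, j2; 𝐖)`. -/
def nD2H (S : MFSetup d) (Wp : NNParams d n1 n2) (z : Vec d × ℝ) (j2 : Fin n2) : ℝ :=
  S.dL z.2 (nyhat S Wp z.1) * S.dφ3 (nH3 S Wp z.1) * Wp.a3 j2 * S.dφ2 (nH2 S Wp z.1 j2)

/-- One SGD step at time `k` with step size `ε` and sample `z`. -/
def sgdStep (S : MFSetup d) (ε : ℝ) (k : ℕ) (z : Vec d × ℝ) (Wp : NNParams d n1 n2) :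
    NNParams d n1 n2 where
  a1 := fun j1 => Wp.a1 j1 -
    (ε * S.ξ1 (k * ε) * (((n2 : ℝ)⁻¹ * ∑ j2, nD2H S Wp z j2 * Wp.a2 j1 j2) *
      S.dφ1 ⟪Wp.a1 j1, z.1⟫)) • z.1
  a2 := fun j1 j2 => Wp.a2 j1 j2 - ε * S.ξ2 (k * ε) * (nD2H S Wp z j2 * S.φ1 ⟪Wp.a1 j1, z.1⟫)
  a3 := fun j2 => Wp.a3 j2 - ε * S.ξ3 (k * ε) *
    (S.dL z.2 (nyhat S Wp z.1) * S.dφ3 (nH3 S Wp z.1) * S.φ2 (nH2 S Wp z.1 j2))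

/-- The SGD trajectory started from `W0` using the data sequence `data`. -/
def sgdTraj (S : MFSetup d) (ε : ℝ) (data : ℕ → Vec d × ℝ) (W0 : NNParams d n1 n2) :
    ℕ → NNParams d n1 n2
  | 0 => W0
  | k + 1 => sgdStep S ε k (data k) (sgdTraj S ε data W0 k)

/-- Network initialization obtained from a neuronal embedding and sampled neurons. -/
def netInit (w10 : Ω1 → Vec d) (w20 : Ω1 → Ω2 → ℝ) (w30 : Ω2 → ℝ)
    (c1 : Fin n1 → Ω1) (c2 : Fin n2 → Ω2) : NNParams d n1 n2 where
  a1 := fun j1 => w10 (c1 j1)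
  a2 := fun j1 j2 => w20 (c1 j1) (c2 j2)
  a3 := fun j2 => w30 (c2 j2)

/-- `V` solves the particle ODEs on `[0, ∞)`. -/
def IsParticleSol (S : MFSetup d) (V : ℝ → NNParams d n1 n2) : Prop :=
  (∀ j2 : Fin n2, ∀ t ∈ Set.Ici (0:ℝ), HasDerivWithinAt (fun s => (V s).a3 j2)
      (-(S.ξ3 t * ∫ z, S.dL z.2 (nyhat S (V t) z.1) * S.dφ3 (nH3 S (V t) z.1) *
        S.φ2 (nH2 S (V t) z.1 j2) ∂S.P)) (Set.Ici 0) t) ∧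
  (∀ (j1 : Fin n1) (j2 : Fin n2), ∀ t ∈ Set.Ici (0:ℝ),
      HasDerivWithinAt (fun s => (V s).a2 j1 j2)
      (-(S.ξ2 t * ∫ z, nD2H S (V t) z j2 * S.φ1 ⟪(V t).a1 j1, z.1⟫ ∂S.P)) (Set.Ici 0) t) ∧
  (∀ j1 : Fin n1, ∀ t ∈ Set.Ici (0:ℝ), HasDerivWithinAt (fun s => (V s).a1 j1)
      ((-(S.ξ1 t)) • ∫ z, (((n2 : ℝ)⁻¹ * ∑ j2, nD2H S (V t) z j2 * (V t).a2 j1 j2) *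
        S.dφ1 ⟪(V t).a1 j1, z.1⟫) • z.1 ∂S.P) (Set.Ici 0) t)

/-- The coupling sample space carries i.i.d. neurons `Cs1 ~ P1^{n1}`, `Cs2 ~ P2^{n2}` and an
i.i.d. data sequence `Data ~ 𝒫^ℕ`, all mutually independent. -/
def IsCoupling (S : MFSetup d) (P1 : Measure Ω1) (P2 : Measure Ω2)
    [IsProbabilityMeasure P1] [IsProbabilityMeasure P2]
    {Θ : Type*} [MeasurableSpace Θ] (μ : Measure Θ)
    (Cs1 : Θ → Fin n1 → Ω1) (Cs2 : Θ → Fin n2 → Ω2) (Data : Θ → ℕ → Vec d × ℝ) : Prop :=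
  Measurable Cs1 ∧ Measurable Cs2 ∧ Measurable Data ∧
  Measure.map Cs1 μ = Measure.pi (fun _ => P1) ∧
  Measure.map Cs2 μ = Measure.pi (fun _ => P2) ∧
  (∀ k, Measure.map (fun θ => Data θ k) μ = S.P) ∧
  ProbabilityTheory.iIndepFun (fun k θ => Data θ k) μ ∧
  ProbabilityTheory.IndepFun Cs1 Cs2 μ ∧
  ProbabilityTheory.IndepFun (fun θ => (Cs1 θ, Cs2 θ)) Data μ

/-- The constant `K_T = K (1 + T^K)`. -/
def KT (K T : ℝ) : ℝ := K * (1 + T ^ K)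

/-- The error bound of the main coupling theorem. -/
def errMain (K : ℝ) (n1 n2 : ℕ) (ε δ T : ℝ) : ℝ :=
  Real.exp (KT K T) * ((Real.sqrt (min n1 n2 : ℕ))⁻¹ + Real.sqrt ε) *
    Real.sqrt (Real.log (3 * (T + 1) * ((max n1 n2 : ℕ) : ℝ) ^ 2 / δ + Real.exp 1))

/-- The `(ρ1, ρ2, ρ3)`-i.i.d. initialization law for a network of widths `(n1, n2)`. -/
def iidInitLaw (d n1 n2 : ℕ) (ρ1 : Measure (Vec d)) (ρ2 ρ3 : Measure ℝ)
    [IsProbabilityMeasure ρ1] [IsProbabilityMeasure ρ2] [IsProbabilityMeasure ρ3] :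
    Measure ((Fin n1 → Vec d) × (Fin n1 → Fin n2 → ℝ) × (Fin n2 → ℝ)) :=
  (Measure.pi fun _ => ρ1).prod
    ((Measure.pi fun _ : Fin n1 => Measure.pi fun _ : Fin n2 => ρ2).prod (Measure.pi fun _ => ρ3))

/-- The law of the initial network parameters produced by a neuronal embedding
`(P1, P2, w10, w20, w30)` at widths `(n1, n2)`. -/
def embedLaw (P1 : Measure Ω1) (P2 : Measure Ω2)
    [IsProbabilityMeasure P1] [IsProbabilityMeasure P2]
    (w10 : Ω1 → Vec d) (w20 : Ω1 → Ω2 → ℝ) (w30 : Ω2 → ℝ) (n1 n2 : ℕ) :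
    Measure ((Fin n1 → Vec d) × (Fin n1 → Fin n2 → ℝ) × (Fin n2 → ℝ)) :=
  Measure.map (fun c : (Fin n1 → Ω1) × (Fin n2 → Ω2) =>
      (fun j1 => w10 (c.1 j1), fun j1 j2 => w20 (c.1 j1) (c.2 j2), fun j2 => w30 (c.2 j2)))
    ((Measure.pi fun _ => P1).prod (Measure.pi fun _ => P2))

/-- The loss functional `𝓛(v1, v2, v3) = E_Z[L(Y, ŷ(X; V))]` (as an extended nonnegative real). -/
def lossOf (S : MFSetup d) (P1 : Measure Ω1) (P2 : Measure Ω2)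
    (v1 : Ω1 → Vec d) (v2 : Ω1 → Ω2 → ℝ) (v3 : Ω2 → ℝ) : ℝ≥0∞ :=
  ∫⁻ z, ENNReal.ofReal (S.L z.2 (S.φ3 (∫ c2, v3 c2 *
    S.φ2 (∫ c1, v2 c1 c2 * S.φ1 ⟪v1 c1, z.1⟫ ∂P1) ∂P2))) ∂S.P

/-- The topological support of a measure. -/
def msupport {α : Type*} [TopologicalSpace α] [MeasurableSpace α] (μ : Measure α) : Set α :=
  {x | ∀ U : Set α, IsOpen U → x ∈ U → 0 < μ U}

/-- The law of the collection `𝒲(n1, n2, T)` of MF weights evaluated along sampled neurons. -/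
def trajLaw (P1 : Measure Ω1) (P2 : Measure Ω2)
    [IsProbabilityMeasure P1] [IsProbabilityMeasure P2]
    (W : MFTraj d Ω1 Ω2) (n1 n2 : ℕ) (T : ℝ) :
    Measure (Set.Icc (0:ℝ) T → Fin n1 → Fin n2 → Vec d × ℝ × ℝ) :=
  Measure.map (fun c : (Fin n1 → Ω1) × (Fin n2 → Ω2) =>
      fun (t : Set.Icc (0:ℝ) T) j1 j2 =>
        (W.w1 t (c.1 j1), W.w2 t (c.1 j1) (c.2 j2), W.w3 t (c.2 j2)))
    ((Measure.pi fun _ => P1).prod (Measure.pi fun _ => P2))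

end ThreeLayerMF

namespace ThreeLayerMF
open MeasureTheory
open scoped RealInnerProductSpace

universe u v

/-- A priori bounds: for some constant `K` depending only on the constant
`K0` of the Regularity assumption, any MF solution `W` whose initialization satisfies
`|||W|||_0 ≤ M < ∞` obeys, for every `T ≥ 0`,
`ess-sup sup_{t ≤ T} |w3(t, C2)| ≤ M + K T` and
`ess-sup sup_{t ≤ T} |w2(t, C1, C2)| ≤ M + K T (M + K T)`; consequently `|||W|||_T < ∞`. -/
theorem mf_a_priori_bounds :
    ∀ K0 : ℝ, 0 < K0 → ∃ K : ℝ, 0 < K ∧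
      ∀ (d : ℕ) (Ω1 : Type u) (Ω2 : Type v)
        [MeasurableSpace Ω1] [MeasurableSpace Ω2]
        (S : MFSetup d), Regularity S K0 →
      ∀ (P1 : Measure Ω1) (P2 : Measure Ω2)
        [IsProbabilityMeasure P1] [IsProbabilityMeasure P2]
        (W : MFTraj d Ω1 Ω2), IsMFSol S P1 P2 W →
      ∀ M : ℝ, 0 ≤ M →
        (∀ᵐ p ∂(P1.prod P2), |W.w2 0 p.1 p.2| ≤ M) →
        (∀ᵐ c2 ∂P2, |W.w3 0 c2| ≤ M) →
      ∀ T : ℝ, 0 ≤ T →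
        (∀ᵐ c2 ∂P2, ∀ t ∈ Set.Icc (0:ℝ) T, |W.w3 t c2| ≤ M + K * T) ∧
        (∀ᵐ p ∂(P1.prod P2), ∀ t ∈ Set.Icc (0:ℝ) T,
          |W.w2 t p.1 p.2| ≤ M + K * T * (M + K * T)) ∧
        ∃ M' : ℝ,
          (∀ᵐ p ∂(P1.prod P2), ∀ t ∈ Set.Icc (0:ℝ) T, |W.w2 t p.1 p.2| ≤ M') ∧
          (∀ᵐ c2 ∂P2, ∀ t ∈ Set.Icc (0:ℝ) T, |W.w3 t c2| ≤ M') := by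
  intro K0 hK0
  set κ := max K0 1 with hκdef
  have hκ1 : (1:ℝ) ≤ κ := le_max_right _ _
  have hκK0 : K0 ≤ κ := le_max_left _ _
  have hκpos : (0:ℝ) < κ := lt_of_lt_of_le one_pos hκ1
  refine ⟨κ ^ 5, by positivity, ?_⟩
  intro d Ω1 Ω2 _ _ S hreg P1 P2 _ _ W hsol M hM h20 h30 T hT
  haveI := hreg.prob
  set K := κ ^ 5 with hKdef
  have hKpos : (0:ℝ) < K := by positivity
  have hK04K : K0 ^ 4 ≤ K :=
    le_trans (pow_le_pow_left₀ hK0.le hκK0 4) (pow_le_pow_right₀ hκ1 (by norm_num))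
  have hK05K : K0 ^ 5 ≤ K := pow_le_pow_left₀ hK0.le hκK0 5
  -- bound on D3
  have hD3 : ∀ t c2, |D3 S P1 P2 W t c2| ≤ K0 ^ 3 := by
    intro t c2
    have h := norm_integral_le_of_norm_le_const (μ := S.P)
      (f := fun z : Vec d × ℝ => S.dL z.2 (yhat S P1 P2 W t z.1) *
        S.dφ3 (H3 S P1 P2 W t z.1) * S.φ2 (H2 S P1 W t z.1 c2)) (C := K0 ^ 3) ?_
    · simpa [D3, Real.norm_eq_abs, measure_univ] using h
    · filter_upwards with z
      rw [Real.norm_eq_abs, abs_mul, abs_mul]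
      have h1 := hreg.bdL z.2 (yhat S P1 P2 W t z.1)
      have h2 := hreg.bdφ3 (H3 S P1 P2 W t z.1)
      have h3 := hreg.bφ2 (H2 S P1 W t z.1 c2)
      calc |S.dL z.2 (yhat S P1 P2 W t z.1)| * |S.dφ3 (H3 S P1 P2 W t z.1)| *
            |S.φ2 (H2 S P1 W t z.1 c2)| ≤ K0 * K0 * K0 :=
          mul_le_mul (mul_le_mul h1 h2 (abs_nonneg _) hK0.le) h3 (abs_nonneg _) (by positivity)
        _ = K0 ^ 3 := by ring
  -- pointwise bound on w3
  have key3 : ∀ c2, |W.w3 0 c2| ≤ M → ∀ t ∈ Set.Icc (0:ℝ) T, |W.w3 t c2| ≤ M + K * T := by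
    intro c2 h0 t ht
    have hmv := (convex_Icc (0:ℝ) T).norm_image_sub_le_of_norm_hasDerivWithin_le
      (f := fun s => W.w3 s c2) (f' := fun s => -(S.ξ3 s * D3 S P1 P2 W s c2))
      (C := K0 ^ 4)
      (fun x hx => (hsol.1 c2 x hx.1).mono Set.Icc_subset_Ici_self)
      (fun x hx => by
        rw [Real.norm_eq_abs, abs_neg, abs_mul, abs_of_nonneg (hreg.ξ3nonneg x)]
        have := hD3 x c2
        have := hreg.bξ3 x
        nlinarith [hreg.ξ3nonneg x, abs_nonneg (D3 S P1 P2 W x c2)])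
      (Set.left_mem_Icc.mpr hT) ht
    rw [Real.norm_eq_abs, Real.norm_eq_abs, sub_zero] at hmv
    have h1 : |W.w3 t c2| ≤ |W.w3 0 c2| + K0 ^ 4 * |t| := by
      have := abs_sub_abs_le_abs_sub (W.w3 t c2) (W.w3 0 c2)
      linarith
    have h2 : K0 ^ 4 * |t| ≤ K * T := by
      rw [abs_of_nonneg ht.1]
      exact mul_le_mul hK04K ht.2 ht.1 hKpos.le
    linarith
  have part1 : ∀ᵐ c2 ∂P2, ∀ t ∈ Set.Icc (0:ℝ) T, |W.w3 t c2| ≤ M + K * T := by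
    filter_upwards [h30] with c2 h using key3 c2 h
  -- lift w3 initial bound to product measure
  have h30' : ∀ᵐ p ∂(P1.prod P2), |W.w3 0 p.2| ≤ M :=
    Measure.quasiMeasurePreserving_snd.ae h30
  have hB : (0:ℝ) ≤ M + K * T := by positivity
  have part2 : ∀ᵐ p ∂(P1.prod P2), ∀ t ∈ Set.Icc (0:ℝ) T,
      |W.w2 t p.1 p.2| ≤ M + K * T * (M + K * T) := by
    filter_upwards [h20, h30'] with p h2 h3
    have hw3 := key3 p.2 h3
    intro t ht
    -- bound on D2 along this trajectory
    have hD2 : ∀ x ∈ Set.Icc (0:ℝ) T, |D2 S P1 P2 W x p.1 p.2| ≤ K0 ^ 4 * (M + K * T) := by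
      intro x hx
      have hw3x := hw3 x hx
      have h := norm_integral_le_of_norm_le_const (μ := S.P)
        (f := fun z : Vec d × ℝ => D2H S P1 P2 W x z p.2 * S.φ1 ⟪W.w1 x p.1, z.1⟫)
        (C := K0 ^ 4 * (M + K * T)) ?_
      · simpa [D2, Real.norm_eq_abs, measure_univ] using h
      · filter_upwards with z
        rw [Real.norm_eq_abs, abs_mul]
        have hD2H : |D2H S P1 P2 W x z p.2| ≤ K0 ^ 3 * (M + K * T) := by
          rw [D2H, abs_mul, abs_mul, abs_mul]
          have h1 := hreg.bdL z.2 (yhat S P1 P2 W x z.1)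
          have h2 := hreg.bdφ3 (H3 S P1 P2 W x z.1)
          have h3 := hreg.bdφ2 (H2 S P1 W x z.1 p.2)
          calc |S.dL z.2 (yhat S P1 P2 W x z.1)| * |S.dφ3 (H3 S P1 P2 W x z.1)| *
                |W.w3 x p.2| * |S.dφ2 (H2 S P1 W x z.1 p.2)| ≤ K0 * K0 * (M + K * T) * K0 :=
              mul_le_mul (mul_le_mul (mul_le_mul h1 h2 (abs_nonneg _) hK0.le) hw3x
                (abs_nonneg _) (by positivity)) h3 (abs_nonneg _) (by positivity)
            _ = K0 ^ 3 * (M + K * T) := by ring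
        have hφ1 := hreg.bφ1 ⟪W.w1 x p.1, z.1⟫
        nlinarith [abs_nonneg (D2H S P1 P2 W x z p.2),
          abs_nonneg (S.φ1 ⟪W.w1 x p.1, z.1⟫)]
    have hmv := (convex_Icc (0:ℝ) T).norm_image_sub_le_of_norm_hasDerivWithin_le
      (f := fun s => W.w2 s p.1 p.2) (f' := fun s => -(S.ξ2 s * D2 S P1 P2 W s p.1 p.2))
      (C := K0 ^ 5 * (M + K * T))
      (fun x hx => (hsol.2.1 p.1 p.2 x hx.1).mono Set.Icc_subset_Ici_self)
      (fun x hx => by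
        rw [Real.norm_eq_abs, abs_neg, abs_mul, abs_of_nonneg (hreg.ξ2nonneg x)]
        have hd := hD2 x hx
        have hb := hreg.bξ2 x
        nlinarith [hreg.ξ2nonneg x, abs_nonneg (D2 S P1 P2 W x p.1 p.2)])
      (Set.left_mem_Icc.mpr hT) ht
    rw [Real.norm_eq_abs, Real.norm_eq_abs, sub_zero] at hmv
    have h1 : |W.w2 t p.1 p.2| ≤ |W.w2 0 p.1 p.2| + K0 ^ 5 * (M + K * T) * |t| := by
      have := abs_sub_abs_le_abs_sub (W.w2 t p.1 p.2) (W.w2 0 p.1 p.2)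
      linarith
    have h2 : K0 ^ 5 * (M + K * T) * |t| ≤ K * T * (M + K * T) := by
      rw [abs_of_nonneg ht.1]
      nlinarith [mul_le_mul hK05K ht.2 ht.1 hKpos.le]
    linarith
  refine ⟨part1, part2, M + K * T + K * T * (M + K * T), ?_, ?_⟩
  · filter_upwards [part2] with p h t ht
    have h1 := h t ht
    nlinarith [mul_nonneg hKpos.le hT]
  · filter_upwards [part1] with c2 h t ht
    have h1 := h t ht
    nlinarith [mul_nonneg hKpos.le hT, mul_nonneg (mul_nonneg hKpos.le hT) hB]


end ThreeLayerMF
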